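/- For words w₁, w₂ of length ≥ 2k with D_{m,k}(w₁) = D_{m,k}(w₂), there exists a regular language R ⊆ V* such that rHI*_{m,k}(w₁) = w₁R and rHI*_{m,k}(w₂) = w₂R. -/

import Mathlib

open scoped Classical

namespace Hairpin

variable {V : Type}

/-- Reversed complement of a word under the involution `bar`. -/
def rc (bar : V → V) (w : List V) : List V := (w.map bar).reverse

/-- `w` admits a right hairpin decomposition `w = δγαβᾱ^R` with `|α| = k`, `|γ| ≤ m`. -/
def hasRightDecomp (bar : V → V) (m k : ℕ) (w : List V) : Prop :=
  ∃ δ γ α β : List V, w = δ ++ γ ++ α ++ β ++ rc bar α ∧ α.length = k ∧ γ.length ≤ m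

def hasLeftDecomp (bar : V → V) (m k : ℕ) (w : List V) : Prop :=
  ∃ α β γ δ : List V, w = α ++ β ++ rc bar α ++ γ ++ δ ∧ α.length = k ∧ γ.length ≤ m

/-- m-bounded right k-hairpin incompletion. -/
noncomputable def rHI (bar : V → V) (m k : ℕ) (w : List V) : Set (List V) :=
  if hasRightDecomp bar m k w then
    { v | ∃ δ γ α β : List V, w = δ ++ γ ++ α ++ β ++ rc bar α ∧ α.length = k ∧
          γ.length ≤ m ∧ v = w ++ rc bar γ }
  else {w}

/-- m-bounded left k-hairpin incompletion. -/
noncomputable def lHI (bar : V → V) (m k : ℕ) (w : List V) : Set (List V) :=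
  if hasLeftDecomp bar m k w then
    { v | ∃ α β γ δ : List V, w = α ++ β ++ rc bar α ++ γ ++ δ ∧ α.length = k ∧
          γ.length ≤ m ∧ v = rc bar γ ++ w }
  else {w}

/-- m-bounded k-hairpin incompletion. -/
noncomputable def HI (bar : V → V) (m k : ℕ) (w : List V) : Set (List V) :=
  rHI bar m k w ∪ lHI bar m k w

noncomputable def rHIn (bar : V → V) (m k : ℕ) (w : List V) : ℕ → Set (List V)
  | 0 => {w}
  | n + 1 => ⋃ v ∈ rHIn bar m k w n, rHI bar m k v

noncomputable def rHIstar (bar : V → V) (m k : ℕ) (w : List V) : Set (List V) :=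
  ⋃ n, rHIn bar m k w n

noncomputable def HIn (bar : V → V) (m k : ℕ) (w : List V) : ℕ → Set (List V)
  | 0 => {w}
  | n + 1 => ⋃ v ∈ HIn bar m k w n, HI bar m k v

noncomputable def HIstar (bar : V → V) (m k : ℕ) (w : List V) : Set (List V) :=
  ⋃ n, HIn bar m k w n

noncomputable def rHIstarL (bar : V → V) (m k : ℕ) (L : Set (List V)) : Set (List V) :=
  ⋃ w ∈ L, rHIstar bar m k w

noncomputable def HIL (bar : V → V) (m k : ℕ) (L : Set (List V)) : Set (List V) :=
  ⋃ w ∈ L, HI bar m k w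

noncomputable def HIstarL (bar : V → V) (m k : ℕ) (L : Set (List V)) : Set (List V) :=
  ⋃ w ∈ L, HIstar bar m k w

/-- The set `C_{m,k}(w)`. -/
def Cmk (bar : V → V) (m k : ℕ) (w : List V) : Set (List V × List V) :=
  { p | ∃ x y w₁ w₂ z : List V,
      x.length ≤ m ∧ y.length = k ∧ w = w₁ ++ (x ++ y) ++ w₂ ∧
      z.length ≤ k ∧ z <:+ w₂ ∧ z <+: rc bar y ∧ p = (x ++ y, z) }

/-- The suffix component of `D_{m,k}(w)`: all suffixes of `w` of length `i+k-1`, `0 ≤ i ≤ m`. -/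
def DmkSuf (m k : ℕ) (w : List V) : Set (List V) :=
  { s | ∃ i ≤ m, s.length = i + k - 1 ∧ s <:+ w }

noncomputable def Dmk (bar : V → V) (m k : ℕ) (w : List V) :
    Set (List V × List V) × Set (List V) :=
  (Cmk bar m k w, DmkSuf m k w)

/-- The set `C'_{m,k}(w)`. -/
def Cmk' (bar : V → V) (m k : ℕ) (w : List V) : Set (List V × List V) :=
  { p | ∃ x y w₁ w₂ z : List V,
      x.length ≤ m ∧ y.length = k ∧ w = w₁ ++ (y ++ x) ++ w₂ ∧
      z.length ≤ k ∧ z <+: w₁ ∧ z <:+ rc bar y ∧ p = (z, y ++ x) }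

/-- The prefix component of `D'_{m,k}(w)`. -/
def DmkPref (m k : ℕ) (w : List V) : Set (List V) :=
  { s | ∃ i ≤ m, s.length = i + k - 1 ∧ s <+: w }

noncomputable def Dmk' (bar : V → V) (m k : ℕ) (w : List V) :
    Set (List V × List V) × Set (List V) :=
  (Cmk' bar m k w, DmkPref m k w)

noncomputable def Emk (bar : V → V) (m k : ℕ) (w : List V) :=
  (Dmk bar m k w, Dmk' bar m k w)


/-- View a set of words as a `Language`. -/
def lang {V : Type} (L : Set (List V)) : Language V := L


variable {V : Type} [Fintype V]

section Aux
variable {α : Type*}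

theorem length_rtake (l : List α) (n : ℕ) : (l.rtake n).length = min n l.length := by
  simp [List.rtake]; omega

theorem rtake_all {l : List α} {n : ℕ} (h : l.length ≤ n) : l.rtake n = l := by
  simp [List.rtake, Nat.sub_eq_zero_of_le h]

theorem rtake_suffix (l : List α) (n : ℕ) : l.rtake n <:+ l := List.drop_suffix _ _

theorem rdrop_prefix (l : List α) (n : ℕ) : l.rdrop n <+: l := List.take_prefix _ _

theorem rdrop_append_rtake (l : List α) (n : ℕ) : l.rdrop n ++ l.rtake n = l :=
  List.take_append_drop _ _

theorem rtake_append_self (a b : List α) : (a ++ b).rtake b.length = b := by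
  rw [List.rtake, List.length_append, show a.length + b.length - b.length = a.length by omega,
    List.drop_left]

theorem suffix_eq_rtake {t l : List α} (h : t <:+ l) : t = l.rtake t.length := by
  obtain ⟨p, rfl⟩ := h
  rw [rtake_append_self]

theorem rtake_append_of_le {n : ℕ} (a b : List α) (h : n ≤ b.length) :
    (a ++ b).rtake n = b.rtake n := by
  simp only [List.rtake, List.length_append]
  rw [show a.length + b.length - n = a.length + (b.length - n) by omega, List.drop_append]
  simp

theorem rtake_append_of_ge {n : ℕ} (a b : List α) (h : b.length ≤ n) :
    (a ++ b).rtake n = a.rtake (n - b.length) ++ b := by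
  simp only [List.rtake, List.length_append]
  rw [show a.length + b.length - n = a.length - (n - b.length) by omega,
    List.drop_append_of_le_length (by omega)]

theorem rtake_rtake (l : List α) {j n : ℕ} (h : j ≤ n) : (l.rtake n).rtake j = l.rtake j := by
  rw [List.rtake, List.rtake, List.rtake, List.length_drop, List.drop_drop]
  congr 1
  omega

theorem rdrop_append_of_le {n : ℕ} (a b : List α) (h : n ≤ b.length) :
    (a ++ b).rdrop n = a ++ b.rdrop n := by
  simp only [List.rdrop, List.length_append]
  rw [show a.length + b.length - n = a.length + (b.length - n) by omega,
    List.take_append]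
  simp

theorem rdrop_append_of_ge {n : ℕ} (a b : List α) (h : b.length ≤ n) :
    (a ++ b).rdrop n = a.rdrop (n - b.length) := by
  simp only [List.rdrop, List.length_append]
  rw [show a.length + b.length - n = a.length - (n - b.length) by omega,
    List.take_append_of_le_length (by omega)]

theorem rdrop_rtake (l : List α) (n j : ℕ) :
    (l.rtake n).rdrop j = (l.rdrop j).rtake (n - j) := by
  rw [List.rdrop_eq_reverse_drop_reverse, List.rtake_eq_reverse_take_reverse,
    List.rtake_eq_reverse_take_reverse, List.rdrop_eq_reverse_drop_reverse]
  simp [List.drop_take]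

theorem prefix_take_of_le {u l : List α} {n : ℕ} (h : u <+: l) (hn : u.length ≤ n) :
    u <+: l.take n := by
  rw [List.prefix_take_iff]; exact ⟨h, hn⟩

theorem suffix_rtake_iff {u l : List α} {n : ℕ} (hn : u.length ≤ n) :
    u <:+ l.rtake n ↔ u <:+ l := by
  constructor
  · exact fun h => h.trans (rtake_suffix _ _)
  · intro h
    rw [suffix_eq_rtake h, ← rtake_rtake l hn]
    exact rtake_suffix _ _

theorem infix_append_split {u a b : List α} :
    u <:+: a ++ b ↔ u <:+: a ∨ u <:+: b ∨
      ∃ u₁ u₂, u = u₁ ++ u₂ ∧ u₁ <:+ a ∧ u₂ <+: b := by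
  constructor
  · rintro ⟨p, q, hpq⟩
    rw [List.append_assoc] at hpq
    rcases List.append_eq_append_iff.mp hpq with ⟨a', ha, hb⟩ | ⟨c', hc, hb⟩
    · rcases List.append_eq_append_iff.mp hb with ⟨x, hx, hq⟩ | ⟨y, hy, hb2⟩
      · exact Or.inl ⟨p, x, by rw [ha, hx]; simp⟩
      · exact Or.inr (Or.inr ⟨a', y, hy, ⟨p, ha.symm⟩, ⟨q, hb2.symm⟩⟩)
    · exact Or.inr (Or.inl ⟨c', q, by rw [hb]; simp⟩)
  · rintro (h | h | ⟨u₁, u₂, rfl, ⟨p, hp⟩, ⟨q, hq⟩⟩)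
    · exact h.trans ⟨[], b, by simp⟩
    · exact h.trans ⟨a, [], by simp⟩
    · exact ⟨p, q, by rw [← hq, ← hp]; simp⟩

theorem infix_concat_iff {u l : List α} {c : α} :
    u <:+: l ++ [c] ↔ u <:+: l ∨ u <:+ l ++ [c] := by
  constructor
  · intro h
    rcases infix_append_split.mp h with h | h | ⟨u₁, u₂, rfl, h₁, h₂⟩
    · exact Or.inl h
    · right
      match u, h with
      | [], _ => exact List.nil_suffix
      | x :: xs, h =>
        have hlen := h.length_le
        simp at hlen
        subst hlen
        have hx : x ∈ [c] := h.subset (by simp)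
        simp at hx
        subst hx
        exact List.suffix_append _ _
    · rcases h₂ with ⟨t, ht⟩
      match u₂, ht with
      | [], _ =>
        left
        rw [List.append_nil]
        exact h₁.isInfix
      | [c'], ht =>
        simp at ht
        right
        obtain ⟨p, hp⟩ := h₁
        exact ⟨p, by rw [← hp, ht.1]; simp⟩
  · rintro (h | h)
    · exact h.trans ⟨[], [c], by simp⟩
    · exact h.isInfix

end Aux
set_option linter.unusedSectionVars false

section Basic

variable (bar : V → V) (m k : ℕ)

@[simp] theorem length_rc (l : List V) : (rc bar l).length = l.length := by simp [rc]

theorem rc_append (a b : List V) : rc bar (a ++ b) = rc bar b ++ rc bar a := by simp [rc]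

theorem rc_rc (hbar : ∀ a, bar (bar a) = a) (l : List V) : rc bar (rc bar l) = l := by
  unfold rc
  rw [List.map_reverse, List.reverse_reverse, List.map_map,
    show bar ∘ bar = id from funext hbar, List.map_id]

/-- The one-step extension condition. -/
def Cond (v γ : List V) : Prop :=
  γ.length ≤ m ∧ (γ ++ rc bar (v.rtake k)) <:+: v.rdrop k

theorem rdrop_append_self {α : Type*} (a b : List α) : (a ++ b).rdrop b.length = a := by
  rw [rdrop_append_of_ge a b le_rfl, Nat.sub_self, List.rdrop_zero]

theorem cond_iff_decomp (hbar : ∀ a, bar (bar a) = a) {v γ : List V} (hv : k ≤ v.length) :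
    (γ ++ rc bar (v.rtake k)) <:+: v.rdrop k ↔
      ∃ δ α β, v = δ ++ γ ++ α ++ β ++ rc bar α ∧ α.length = k := by
  constructor
  · rintro ⟨δ, β, h⟩
    refine ⟨δ, rc bar (v.rtake k), β, ?_, by simp [length_rtake]; omega⟩
    conv_lhs => rw [← rdrop_append_rtake v k]
    rw [← h, rc_rc bar hbar]
    simp [List.append_assoc]
  · rintro ⟨δ, α, β, hveq, hα⟩
    have htake : v.rtake k = rc bar α := by
      rw [hveq, show k = (rc bar α).length by simp [hα]]
      exact rtake_append_self _ _
    have hdrop : v.rdrop k = δ ++ γ ++ α ++ β := by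
      rw [hveq, show k = (rc bar α).length by simp [hα]]
      exact rdrop_append_self _ _
    rw [htake, hdrop, rc_rc bar hbar]
    exact ⟨δ, β, by simp [List.append_assoc]⟩

theorem hasRightDecomp_iff (hbar : ∀ a, bar (bar a) = a) {v : List V} (hv : k ≤ v.length) :
    hasRightDecomp bar m k v ↔ ∃ γ, Cond bar m k v γ := by
  constructor
  · rintro ⟨δ, γ, α, β, hveq, hα, hγ⟩
    exact ⟨γ, hγ, (cond_iff_decomp bar k hbar hv).mpr ⟨δ, α, β, hveq, hα⟩⟩
  · rintro ⟨γ, hγ, hinf⟩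
    obtain ⟨δ, α, β, hveq, hα⟩ := (cond_iff_decomp bar k hbar hv).mp hinf
    exact ⟨δ, γ, α, β, hveq, hα, hγ⟩

theorem rHI_eq (hbar : ∀ a, bar (bar a) = a) {v : List V} (hv : k ≤ v.length) :
    rHI bar m k v = {v} ∪ {x | ∃ γ, Cond bar m k v γ ∧ x = v ++ rc bar γ} := by
  unfold rHI
  split_ifs with h
  · ext x
    simp only [Set.mem_setOf_eq, Set.mem_union, Set.mem_singleton_iff]
    constructor
    · rintro ⟨δ, γ, α, β, hveq, hα, hγ, rfl⟩
      exact Or.inr ⟨γ, ⟨hγ, (cond_iff_decomp bar k hbar hv).mpr ⟨δ, α, β, hveq, hα⟩⟩, rfl⟩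
    · rintro (rfl | ⟨γ, ⟨hγ, hinf⟩, rfl⟩)
      · obtain ⟨δ, γ, α, β, hveq, hα, hγ⟩ := h
        exact ⟨δ ++ γ, [], α, β, by rw [hveq]; simp [List.append_assoc], hα, by simp,
          by simp [rc]⟩
      · obtain ⟨δ, α, β, hveq, hα⟩ := (cond_iff_decomp bar k hbar hv).mp hinf
        exact ⟨δ, γ, α, β, hveq, hα, hγ, rfl⟩
  · ext x
    simp only [Set.mem_singleton_iff, Set.mem_union, Set.mem_setOf_eq]
    constructor
    · exact Or.inl
    · rintro (rfl | ⟨γ, hc, rfl⟩)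
      · rfl
      · exact absurd ((hasRightDecomp_iff bar m k hbar hv).mpr ⟨γ, hc⟩) h

/-- Reachability by iterated right hairpin incompletion, tracked on the appended part. -/
inductive Reach (w : List V) : List V → Prop
  | nil : Reach w []
  | snoc (s γ : List V) : Reach w s → Cond bar m k (w ++ s) γ → Reach w (s ++ rc bar γ)

@[simp] theorem rHIn_zero (w : List V) : rHIn bar m k w 0 = {w} := rfl

theorem rHIn_succ (w : List V) (n : ℕ) :
    rHIn bar m k w (n + 1) = ⋃ v ∈ rHIn bar m k w n, rHI bar m k v := rfl

theorem rHIstar_eq_image (hbar : ∀ a, bar (bar a) = a) {w : List V} (hw : k ≤ w.length) :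
    rHIstar bar m k w = (fun s => w ++ s) '' {s | Reach bar m k w s} := by
  apply Set.Subset.antisymm
  · rintro v hv
    obtain ⟨n, hn⟩ : ∃ n, v ∈ rHIn bar m k w n := by
      simpa [rHIstar, Set.mem_iUnion] using hv
    clear hv
    induction n generalizing v with
    | zero => exact ⟨[], Reach.nil, by simp_all⟩
    | succ n ih =>
      rw [rHIn_succ] at hn
      simp only [Set.mem_iUnion] at hn
      obtain ⟨u, hu, hvu⟩ := hn
      obtain ⟨s, hs, rfl⟩ := ih hu
      rw [rHI_eq bar m k hbar (by simp; omega)] at hvu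
      rcases hvu with rfl | ⟨γ, hc, rfl⟩
      · exact ⟨s, hs, rfl⟩
      · exact ⟨s ++ rc bar γ, Reach.snoc s γ hs hc, by simp [List.append_assoc]⟩
  · rintro v ⟨s, hs, rfl⟩
    simp only [Set.mem_setOf_eq] at hs
    suffices h : ∃ n, w ++ s ∈ rHIn bar m k w n by
      obtain ⟨n, hn⟩ := h
      exact Set.mem_iUnion.mpr ⟨n, hn⟩
    induction hs with
    | nil => exact ⟨0, by simp⟩
    | snoc s γ hs hc ih =>
      obtain ⟨n, hn⟩ := ih
      refine ⟨n + 1, ?_⟩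
      rw [rHIn_succ]
      refine Set.mem_iUnion.mpr ⟨w ++ s, Set.mem_iUnion.mpr ⟨hn, ?_⟩⟩
      rw [rHI_eq bar m k hbar (by simp; omega)]
      exact Or.inr ⟨γ, hc, by simp [List.append_assoc]⟩

end Basic

section Transfer

variable (bar : V → V) (m k : ℕ)

theorem suffix_transfer {w₁ w₂ : List V} (hm : 1 ≤ m) (hk : 1 ≤ k)
    (h₁ : 2 * k ≤ w₁.length) (h₂ : 2 * k ≤ w₂.length)
    (hS : DmkSuf m k w₁ = DmkSuf m k w₂) {t : List V}
    (hlen : t.length ≤ m + k - 1) (ht : t <:+ w₁) : t <:+ w₂ := by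
  by_cases hbig : k - 1 ≤ t.length
  · have : t ∈ DmkSuf m k w₁ := ⟨t.length + 1 - k, by omega, by omega, ht⟩
    rw [hS] at this
    obtain ⟨i, _, _, hsuf⟩ := this
    exact hsuf
  · have ht' : w₁.rtake (k-1) ∈ DmkSuf m k w₁ :=
      ⟨0, by omega, by rw [length_rtake]; omega, rtake_suffix _ _⟩
    rw [hS] at ht'
    obtain ⟨i, _, _, hsuf⟩ := ht'
    have htt : t <:+ w₁.rtake (k-1) := by
      rcases List.suffix_or_suffix_of_suffix ht (rtake_suffix w₁ (k-1)) with h | h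
      · exact h
      · have := h.length_le
        rw [length_rtake] at this
        omega
    exact htt.trans hsuf

theorem rtake_transfer {w₁ w₂ : List V} (hm : 1 ≤ m) (hk : 1 ≤ k)
    (h₁ : 2 * k ≤ w₁.length) (h₂ : 2 * k ≤ w₂.length)
    (hS : DmkSuf m k w₁ = DmkSuf m k w₂) {j : ℕ} (hj : j ≤ k) :
    w₁.rtake j = w₂.rtake j := by
  have hsuf : w₁.rtake j <:+ w₂ := by
    refine suffix_transfer m k hm hk h₁ h₂ hS ?_ (rtake_suffix _ _)
    rw [length_rtake]; omega
  have := suffix_eq_rtake hsuf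
  rwa [length_rtake, min_eq_left (by omega)] at this

theorem mem_Cmk_of {w γ y : List V} (hγ : γ.length ≤ m) (hy : y.length = k)
    (h : (γ ++ y) <:+: w) : (γ ++ y, ([] : List V)) ∈ Cmk bar m k w := by
  obtain ⟨p, q, hpq⟩ := h
  exact ⟨γ, y, p, q, [], hγ, hy, hpq.symm, by simp, List.nil_suffix, List.nil_prefix, rfl⟩

theorem infix_of_mem_Cmk {w u z : List V} (h : (u, z) ∈ Cmk bar m k w) : u <:+: w := by
  obtain ⟨x, y, p, q, z', _, _, hw, _, _, _, hp⟩ := h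
  have hu : x ++ y = u := (congrArg Prod.fst hp).symm
  exact ⟨p, q, by rw [hu] at hw; exact hw.symm⟩

theorem key_near (hbar : ∀ a, bar (bar a) = a) {w s γ : List V} (hw : 2 * k ≤ w.length)
    (hs : s.length < k) (hk : 1 ≤ k) (hγ : γ.length ≤ m) :
    (γ ++ rc bar (w.rtake (k - s.length) ++ s)) <:+: w.rdrop (k - s.length) ↔
      (γ ++ rc bar (w.rtake (k - s.length) ++ s), w.rtake (k - s.length)) ∈ Cmk bar m k w := by
  set j := k - s.length with hj
  set α := rc bar (w.rtake j ++ s) with hα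
  have hjw : j ≤ w.length := by omega
  have hαlen : α.length = k := by
    rw [hα, length_rc, List.length_append, length_rtake]; omega
  constructor
  · rintro ⟨p, q, hpq⟩
    refine ⟨γ, α, p, q ++ w.rtake j, w.rtake j, hγ, hαlen, ?_, ?_, ?_, ?_, rfl⟩
    · conv_lhs => rw [← rdrop_append_rtake w j, ← hpq]
      simp [List.append_assoc]
    · rw [length_rtake]; omega
    · exact List.suffix_append _ _
    · rw [hα, rc_rc bar hbar]
      exact List.prefix_append _ _
  · rintro ⟨x, y, p, q, z', hx, hy, hweq, hzlen, hzsuf, hzpre, hpair⟩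
    have hu : x ++ y = γ ++ α := (congrArg Prod.fst hpair).symm
    have hz : z' = w.rtake j := (congrArg Prod.snd hpair).symm
    have hjq : j ≤ q.length := by
      have := hzsuf.length_le
      rw [hz, length_rtake] at this
      omega
    have hdrop : w.rdrop j = (p ++ (x ++ y)) ++ q.rdrop j := by
      rw [hweq, rdrop_append_of_le _ _ hjq]
    refine ⟨p, q.rdrop j, ?_⟩
    rw [hdrop, hu]

theorem cond_transfer (hbar : ∀ a, bar (bar a) = a) {w₁ w₂ : List V} (hm : 1 ≤ m) (hk : 1 ≤ k)
    (h₁ : 2 * k ≤ w₁.length) (h₂ : 2 * k ≤ w₂.length)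
    (hD : Dmk bar m k w₁ = Dmk bar m k w₂) (s γ : List V)
    (hc : Cond bar m k (w₁ ++ s) γ) : Cond bar m k (w₂ ++ s) γ := by
  have hC : Cmk bar m k w₁ = Cmk bar m k w₂ := congrArg Prod.fst hD
  have hS : DmkSuf m k w₁ = DmkSuf m k w₂ := congrArg Prod.snd hD
  obtain ⟨hγ, hinf⟩ := hc
  refine ⟨hγ, ?_⟩
  by_cases hsk : k ≤ s.length
  · rw [rtake_append_of_le _ _ hsk, rdrop_append_of_le _ _ hsk] at hinf ⊢
    have hylen : (rc bar (s.rtake k)).length = k := by rw [length_rc, length_rtake]; omega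
    have trans_w : (γ ++ rc bar (s.rtake k)) <:+: w₁ → (γ ++ rc bar (s.rtake k)) <:+: w₂ := by
      intro h
      have hmem := mem_Cmk_of bar m k hγ hylen h
      rw [hC] at hmem
      exact infix_of_mem_Cmk bar m k hmem
    rcases infix_append_split.mp hinf with h | h | ⟨u₁, u₂, hu12, hsuf₁, hpre₂⟩
    · exact infix_append_split.mpr (Or.inl (trans_w h))
    · exact infix_append_split.mpr (Or.inr (Or.inl h))
    · rcases eq_or_ne u₂ [] with rfl | hne
      · rw [List.append_nil] at hu12
        exact infix_append_split.mpr (Or.inl (trans_w (hu12 ▸ hsuf₁.isInfix)))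
      · have hlen2 : 1 ≤ u₂.length := by
          cases u₂ with
          | nil => exact absurd rfl hne
          | cons a t => simp
        have hlen1 : u₁.length ≤ m + k - 1 := by
          have h3 := congrArg List.length hu12
          simp only [List.length_append] at h3
          have h4 : (γ ++ rc bar (s.rtake k)).length = γ.length + k := by
            rw [List.length_append, hylen]
          omega
        exact infix_append_split.mpr (Or.inr (Or.inr ⟨u₁, u₂, hu12,
          suffix_transfer m k hm hk h₁ h₂ hS hlen1 hsuf₁, hpre₂⟩))
  · push_neg at hsk
    rw [rtake_append_of_ge _ _ (by omega), rdrop_append_of_ge _ _ (by omega)] at hinf ⊢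
    rw [rtake_transfer m k hm hk h₁ h₂ hS (by omega : k - s.length ≤ k)] at hinf
    have hkey₁ := key_near bar m k hbar h₁ hsk hk hγ
    have hkey₂ := key_near bar m k hbar h₂ hsk hk hγ
    rw [rtake_transfer m k hm hk h₁ h₂ hS (by omega : k - s.length ≤ k), hC] at hkey₁
    exact hkey₂.mpr (hkey₁.mp hinf)

theorem reach_transfer (hbar : ∀ a, bar (bar a) = a) {w₁ w₂ : List V} (hm : 1 ≤ m) (hk : 1 ≤ k)
    (h₁ : 2 * k ≤ w₁.length) (h₂ : 2 * k ≤ w₂.length)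
    (hD : Dmk bar m k w₁ = Dmk bar m k w₂) {s : List V}
    (hr : Reach bar m k w₁ s) : Reach bar m k w₂ s := by
  induction hr with
  | nil => exact Reach.nil
  | snoc s γ hs hc ih =>
    exact Reach.snoc s γ ih (cond_transfer bar m k hbar hm hk h₁ h₂ hD s γ hc)

end Transfer

section StateMachine

variable (bar : V → V) (m k : ℕ)

/-- Infixes of length at most `m+k` of `s.rdrop k`. -/
def Ist (s : List V) : Set (List V) := {u | u.length ≤ m + k ∧ u <:+: s.rdrop k}

/-- The finite-state abstraction of the appended word `s`. -/
def st (s : List V) : List V × List V × Set (List V) :=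
  (s.take (m + 2*k), s.rtake (m + 2*k), Ist m k s)

/-- One-letter update of the state abstraction. -/
def stUpd (q : List V × List V × Set (List V)) (a : V) : List V × List V × Set (List V) :=
  ((if q.1.length < m + 2*k then q.1 ++ [a] else q.1),
   (q.2.1 ++ [a]).rtake (m + 2*k),
   q.2.2 ∪ {u | u.length ≤ m + k ∧ u <:+ ((q.2.1 ++ [a]).rtake (m + 2*k)).rdrop k})

def stepChunk (q : List V × List V × Set (List V)) (c : List V) :
    List V × List V × Set (List V) :=
  c.foldl (stUpd m k) q

theorem rdrop_succ_eq (s : List V) (k : ℕ) :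
    ∃ t : List V, s.rdrop k = s.rdrop (k+1) ++ t ∧ t.length ≤ 1 := by
  by_cases h : s.length ≤ k
  · refine ⟨[], ?_, by simp⟩
    rw [List.append_nil, List.rdrop, List.rdrop, Nat.sub_eq_zero_of_le h,
      Nat.sub_eq_zero_of_le (by omega)]
  · refine ⟨(s.drop (s.length - (k+1))).take 1, ?_, by simp⟩
    rw [List.rdrop, List.rdrop, show s.length - k = (s.length - (k+1)) + 1 by omega,
      List.take_add]

theorem st_upd (hk : 1 ≤ k) (s : List V) (a : V) :
    st m k (s ++ [a]) = stUpd m k (st m k s) a := by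
  have hM : 1 ≤ m + 2*k := by omega
  refine Prod.ext ?_ (Prod.ext ?_ ?_)
  · -- take component
    show (s ++ [a]).take (m + 2*k) =
      (if (s.take (m + 2*k)).length < m + 2*k then s.take (m + 2*k) ++ [a] else s.take (m + 2*k))
    rw [List.length_take]
    by_cases h : s.length < m + 2*k
    · rw [if_pos (by omega), List.take_of_length_le (l := s ++ [a]) (by simp; omega),
        List.take_of_length_le (l := s) (by omega)]
    · rw [if_neg (by omega), List.take_append_of_le_length (by omega)]
  · -- rtake component
    show (s ++ [a]).rtake (m + 2*k) = ((st m k s).2.1 ++ [a]).rtake (m + 2*k)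
    show (s ++ [a]).rtake (m + 2*k) = (s.rtake (m + 2*k) ++ [a]).rtake (m + 2*k)
    rw [rtake_append_of_ge _ _ (by simp; omega : ([a] : List V).length ≤ m + 2*k),
        rtake_append_of_ge _ _ (by simp; omega : ([a] : List V).length ≤ m + 2*k)]
    simp only [List.length_singleton]
    rw [rtake_rtake s (by omega : m + 2*k - 1 ≤ m + 2*k)]
  · -- infix-set component
    show Ist m k (s ++ [a]) = Ist m k s ∪
      {u | u.length ≤ m + k ∧ u <:+ (((st m k s).2.1 ++ [a]).rtake (m + 2*k)).rdrop k}
    have hr : ((st m k s).2.1 ++ [a]).rtake (m + 2*k) = (s ++ [a]).rtake (m + 2*k) := by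
      show (s.rtake (m + 2*k) ++ [a]).rtake (m + 2*k) = _
      rw [rtake_append_of_ge _ _ (by simp; omega : ([a] : List V).length ≤ m + 2*k),
          rtake_append_of_ge _ _ (by simp; omega : ([a] : List V).length ≤ m + 2*k)]
      simp only [List.length_singleton]
      rw [rtake_rtake s (by omega : m + 2*k - 1 ≤ m + 2*k)]
    rw [hr]
    have hrdk : ((s ++ [a]).rtake (m + 2*k)).rdrop k = ((s ++ [a]).rdrop k).rtake (m + k) := by
      rw [rdrop_rtake, show m + 2*k - k = m + k by omega]
    rw [hrdk]
    have hsetr : {u : List V | u.length ≤ m + k ∧ u <:+ ((s ++ [a]).rdrop k).rtake (m + k)}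
        = {u : List V | u.length ≤ m + k ∧ u <:+ (s ++ [a]).rdrop k} := by
      ext u
      simp only [Set.mem_setOf_eq, and_congr_right_iff]
      intro hu
      exact suffix_rtake_iff hu
    rw [hsetr]
    have hcons : (s ++ [a]).rdrop k = s.rdrop (k - 1) := by
      conv_lhs => rw [show k = (k-1) + 1 by omega]
      rw [List.rdrop_concat_succ]
    obtain ⟨t, hts, htlen⟩ := rdrop_succ_eq s (k-1)
    rw [show (k-1) + 1 = k by omega] at hts
    ext u
    simp only [Ist, Set.mem_setOf_eq, Set.mem_union, hcons, hts]
    constructor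
    · rintro ⟨hu, hinf⟩
      match t, htlen with
      | [], _ =>
        rw [List.append_nil] at hinf
        exact Or.inl ⟨hu, hinf⟩
      | [c], _ =>
        rcases infix_concat_iff.mp hinf with h | h
        · exact Or.inl ⟨hu, h⟩
        · exact Or.inr ⟨hu, h⟩
    · rintro (⟨hu, hinf⟩ | ⟨hu, hsuf⟩)
      · exact ⟨hu, hinf.trans (List.prefix_append _ _).isInfix⟩
      · exact ⟨hu, hsuf.isInfix⟩

theorem st_chunk (hk : 1 ≤ k) (s c : List V) :
    st m k (s ++ c) = stepChunk m k (st m k s) c := by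
  induction c generalizing s with
  | nil => simp [stepChunk]
  | cons b c' ih =>
    rw [show s ++ b :: c' = (s ++ [b]) ++ c' by simp, ih (s ++ [b]), st_upd m k hk]
    rfl

end StateMachine

section CondQ

variable (bar : V → V) (m k : ℕ)

/-- The step condition read off from a state, in the regime `m + 2k ≤ |s|`. -/
def CondBig (w : List V) (q : List V × List V × Set (List V)) (γ : List V) : Prop :=
  γ.length ≤ m ∧
    ((γ ++ rc bar (q.2.1.rtake k)) <:+: w ∨ (γ ++ rc bar (q.2.1.rtake k)) ∈ q.2.2 ∨
      ∃ u₁ u₂, γ ++ rc bar (q.2.1.rtake k) = u₁ ++ u₂ ∧ u₁ <:+ w ∧ u₂ <+: q.1.rdrop k)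

/-- The step condition read off from a state. -/
def CondQ (w : List V) (q : List V × List V × Set (List V)) (γ : List V) : Prop :=
  if q.1.length < m + 2*k then Cond bar m k (w ++ q.1) γ else CondBig bar m k w q γ

theorem condQ_iff (w s γ : List V) :
    CondQ bar m k w (st m k s) γ ↔ Cond bar m k (w ++ s) γ := by
  unfold CondQ
  by_cases hsM : s.length < m + 2*k
  · rw [if_pos (by simp only [st, List.length_take]; omega),
      show (st m k s).1 = s from List.take_of_length_le (by omega)]
  · push_neg at hsM
    rw [if_neg (by simp only [st, List.length_take]; omega)]
    have hks : k ≤ s.length := by omega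
    have hrt : (w ++ s).rtake k = (st m k s).2.1.rtake k := by
      show _ = (s.rtake (m + 2*k)).rtake k
      rw [rtake_append_of_le _ _ hks, rtake_rtake s (by omega : k ≤ m + 2*k)]
    have hrd : (w ++ s).rdrop k = w ++ s.rdrop k :=
      rdrop_append_of_le _ _ hks
    have h21 : (st m k s).2.1 = s.rtake (m + 2*k) := rfl
    have h22 : (st m k s).2.2 = Ist m k s := rfl
    have h1 : (st m k s).1 = s.take (m + 2*k) := rfl
    set u := γ ++ rc bar ((st m k s).2.1.rtake k) with hu
    have hulen : u.length = γ.length + k := by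
      rw [hu, List.length_append, length_rc, h21, length_rtake, length_rtake]
      congr 1
      omega
    have hseg : (s.rdrop k).take (m + k) = (s.take (m + 2*k)).rdrop k := by
      show (s.take (s.length - k)).take (m+k) = (s.take (m+2*k)).take ((s.take (m+2*k)).length - k)
      rw [List.take_take, List.take_take, List.length_take]
      congr 1
      omega
    unfold Cond
    rw [hrt, hrd, ← hu]
    apply and_congr_right
    intro hγ
    have humk : u.length ≤ m + k := by omega
    constructor
    · rintro (h | h | ⟨u₁, u₂, hu12, hsuf, hpre⟩)
      · exact infix_append_split.mpr (Or.inl h)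
      · have h' : u ∈ Ist m k s := h22 ▸ h
        exact infix_append_split.mpr (Or.inr (Or.inl h'.2))
      · refine infix_append_split.mpr (Or.inr (Or.inr ⟨u₁, u₂, hu12, hsuf, ?_⟩))
        rw [h1, ← hseg] at hpre
        exact hpre.trans (List.take_prefix _ _)
    · intro hinf
      rcases infix_append_split.mp hinf with h | h | ⟨u₁, u₂, hu12, hsuf, hpre⟩
      · exact Or.inl h
      · exact Or.inr (Or.inl (h22 ▸ (⟨humk, h⟩ : u ∈ Ist m k s)))
      · refine Or.inr (Or.inr ⟨u₁, u₂, hu12, hsuf, ?_⟩)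
        rw [h1, ← hseg]
        exact prefix_take_of_le hpre (by
          have := congrArg List.length hu12
          simp only [List.length_append] at this
          omega)

end CondQ

section Automaton

variable (bar : V → V) (m k : ℕ)

/-- The bounded state space. -/
def StateOK : Set ((List V × List V × Set (List V)) × List V) :=
  {x | x.1.1.length ≤ m + 2*k ∧ x.1.2.1.length ≤ m + 2*k ∧
    x.1.2.2 ⊆ {u : List V | u.length ≤ m + k} ∧ x.2.length ≤ m}

theorem stateOK_finite : (StateOK m k (V := V)).Finite := by
  have hA : {l : List V | l.length ≤ m + 2*k}.Finite := List.finite_length_le V (m + 2*k)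
  have hB : {l : List V | l.length ≤ m}.Finite := List.finite_length_le V m
  have hU : {l : List V | l.length ≤ m + k}.Finite := List.finite_length_le V (m + k)
  have hP : {I : Set (List V) | I ⊆ {u : List V | u.length ≤ m + k}}.Finite :=
    hU.finite_subsets
  apply Set.Finite.subset (((hA.prod (hA.prod hP)).prod hB))
  rintro ⟨⟨p, r, I⟩, d⟩ ⟨h1, h2, h3, h4⟩
  exact ⟨⟨h1, h2, h3⟩, h4⟩

theorem st_ok (s pend : List V) (hpend : pend.length ≤ m) :
    (st m k s, pend) ∈ StateOK m k := by
  refine ⟨?_, ?_, ?_, hpend⟩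
  · show (s.take (m + 2*k)).length ≤ m + 2*k
    rw [List.length_take]; omega
  · show (s.rtake (m + 2*k)).length ≤ m + 2*k
    rw [length_rtake]; omega
  · rintro u ⟨hu, _⟩
    exact hu

/-- Transition relation of the nondeterministic automaton recognizing the set of
possible extensions. -/
def TransRel (w : List V) (x : (List V × List V × Set (List V)) × List V) (a : V)
    (y : (List V × List V × Set (List V)) × List V) : Prop :=
  (∃ rest, x.2 = a :: rest ∧ y = (x.1, rest)) ∨
  (x.2 = [] ∧ ∃ γ, CondQ bar m k w x.1 γ ∧ rc bar γ = a :: y.2 ∧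
    y.1 = stepChunk m k x.1 (a :: y.2))

/-- The NFA recognizing `{s | Reach bar m k w s}`. -/
noncomputable def autNFA (w : List V) : NFA V (↥(StateOK m k (V := V))) where
  step x a := {y | TransRel bar m k w x.val a y.val}
  start := {x | x.val = (st m k [], [])}
  accept := {x | x.val.2 = []}

theorem aut_evalFrom_append (w : List V) (S) (x y : List V) :
    (autNFA bar m k w).evalFrom S (x ++ y) =
      (autNFA bar m k w).evalFrom ((autNFA bar m k w).evalFrom S x) y :=
  List.foldl_append

theorem aut_consume (w : List V) (c : List V) :
    ∀ (S : Set (↥(StateOK m k (V := V)))) (x y : ↥(StateOK m k (V := V))),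
      x ∈ S → x.val.1 = y.val.1 → x.val.2 = c → y.val.2 = [] →
        y ∈ (autNFA bar m k w).evalFrom S c := by
  induction c with
  | nil =>
    intro S x y hx h1 h2 h3
    have : x = y := Subtype.ext (Prod.ext h1 (h2.trans h3.symm))
    rwa [← this]
  | cons b c' ih =>
    intro S x y hx h1 h2 h3
    have hok : (x.val.1, c') ∈ StateOK m k := by
      obtain ⟨o1, o2, o3, o4⟩ := x.property
      refine ⟨o1, o2, o3, ?_⟩
      show c'.length ≤ m
      have : x.val.2.length ≤ m := o4
      rw [h2] at this
      simp at this
      omega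
    set x' : ↥(StateOK m k (V := V)) := ⟨(x.val.1, c'), hok⟩ with hx'
    have hstep : x' ∈ (autNFA bar m k w).stepSet S b := by
      rw [NFA.mem_stepSet]
      exact ⟨x, hx, Or.inl ⟨c', h2, rfl⟩⟩
    show y ∈ (autNFA bar m k w).evalFrom ((autNFA bar m k w).stepSet S b) c'
    exact ih _ x' y hstep h1 rfl h3

theorem aut_fwd (hk : 1 ≤ k) (w : List V) {s : List V} (hr : Reach bar m k w s)
    (y : ↥(StateOK m k (V := V))) (hy : y.val = (st m k s, [])) :
    y ∈ (autNFA bar m k w).eval s := by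
  induction hr generalizing y with
  | nil => exact hy
  | @snoc s γ hs hc ih =>
    cases hrc : rc bar γ with
    | nil =>
      rw [hrc, List.append_nil] at hy
      rw [List.append_nil]
      exact ih y hy
    | cons b c' =>
      have hclen : (b :: c').length ≤ m := by
        rw [← hrc, length_rc]; exact hc.1
      have hok0 := st_ok m k s [] (by simp)
      have hok1 : (stepChunk m k (st m k s) (b :: c'), c') ∈ StateOK m k := by
        rw [← st_chunk m k hk]
        exact st_ok m k _ c' (by
          simp only [List.length_cons] at hclen
          omega)
      have hx0 : (⟨(st m k s, []), hok0⟩ : ↥(StateOK m k (V := V))) ∈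
          (autNFA bar m k w).eval s := ih _ rfl
      rw [hrc] at hy
      rw [show (autNFA bar m k w).eval (s ++ (b :: c'))
            = (autNFA bar m k w).evalFrom ((autNFA bar m k w).eval s) (b :: c') from
          aut_evalFrom_append bar m k w _ _ _]
      have hx1ok : (⟨(stepChunk m k (st m k s) (b :: c'), c'), hok1⟩ :
          ↥(StateOK m k (V := V))) ∈
          (autNFA bar m k w).stepSet ((autNFA bar m k w).eval s) b := by
        rw [NFA.mem_stepSet]
        refine ⟨_, hx0, Or.inr ⟨rfl, γ, (condQ_iff bar m k w s γ).mpr hc, hrc, rfl⟩⟩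
      show y ∈ (autNFA bar m k w).evalFrom ((autNFA bar m k w).stepSet _ b) c'
      refine aut_consume bar m k w c' _ _ y hx1ok ?_ rfl ?_
      · show stepChunk m k (st m k s) (b :: c') = y.val.1
        have hyy : y.val.1 = st m k (s ++ b :: c') := by rw [hy]
        rw [hyy, ← st_chunk m k hk]
      · rw [hy]

theorem aut_bwd (hk : 1 ≤ k) (w : List V) (x : List V) :
    ∀ y ∈ (autNFA bar m k w).eval x,
      ∃ s, Reach bar m k w s ∧ y.val.1 = st m k s ∧ s = x ++ y.val.2 := by
  induction x using List.reverseRecOn with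
  | nil =>
    intro y hy
    have : y.val = (st m k [], []) := hy
    exact ⟨[], Reach.nil, by rw [this], by simp [this]⟩
  | append_singleton x a ih =>
    intro y hy
    rw [NFA.eval_append_singleton, NFA.mem_stepSet] at hy
    obtain ⟨t, ht, htrans⟩ := hy
    rcases htrans with ⟨rest, hpend, hyval⟩ | ⟨hpend0, γ, hcq, hrc, hy1⟩
    · obtain ⟨s, hr, hq, hs⟩ := ih t ht
      refine ⟨s, hr, ?_, ?_⟩
      · rw [hyval]; exact hq
      · rw [hs, hpend, hyval]
        simp
    · obtain ⟨s, hr, hq, hs⟩ := ih t ht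
      rw [hpend0, List.append_nil] at hs
      subst hs
      rw [hq] at hcq
      have hc : Cond bar m k (w ++ s) γ := (condQ_iff bar m k w s γ).mp hcq
      refine ⟨s ++ rc bar γ, Reach.snoc s γ hr hc, ?_, ?_⟩
      · rw [hy1, hq, st_chunk m k hk, hrc]
      · rw [hrc]
        simp

theorem aut_accepts (hk : 1 ≤ k) (w : List V) :
    (autNFA bar m k w).accepts = {s | Reach bar m k w s} := by
  ext x
  rw [NFA.mem_accepts]
  constructor
  · rintro ⟨y, hyacc, hyeval⟩
    obtain ⟨s, hr, _, hs⟩ := aut_bwd bar m k hk w x y hyeval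
    have : s = x := by rw [hs, hyacc, List.append_nil]
    rwa [← this]
  · intro hx
    refine ⟨⟨(st m k x, []), st_ok m k x [] (by simp)⟩, rfl, ?_⟩
    exact aut_fwd bar m k hk w hx _ rfl

theorem reach_regular (hk : 1 ≤ k) (w : List V) :
    Language.IsRegular (lang {s | Reach bar m k w s}) := by
  have hfin : Finite (↥(StateOK m k (V := V))) := (stateOK_finite m k).to_subtype
  have : Fintype (↥(StateOK m k (V := V))) := Fintype.ofFinite _
  refine ⟨Set (↥(StateOK m k (V := V))), Fintype.ofFinite _, (autNFA bar m k w).toDFA, ?_⟩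
  rw [NFA.toDFA_correct]
  exact aut_accepts bar m k hk w

end Automaton
theorem rHIstar_eq_concat_regular (bar : V → V) (hbar : ∀ a, bar (bar a) = a) (m k : ℕ) (hm : 1 ≤ m) (hk : 1 ≤ k)
    (w₁ w₂ : List V) (h₁ : 2 * k ≤ w₁.length) (h₂ : 2 * k ≤ w₂.length)
    (h : Dmk bar m k w₁ = Dmk bar m k w₂) :
    ∃ R : Set (List V), Language.IsRegular (lang R) ∧
      rHIstar bar m k w₁ = (fun r => w₁ ++ r) '' R ∧
      rHIstar bar m k w₂ = (fun r => w₂ ++ r) '' R := by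
  refine ⟨{s | Reach bar m k w₁ s}, reach_regular bar m k hk w₁, ?_, ?_⟩
  · exact rHIstar_eq_image bar m k hbar (by omega)
  · rw [rHIstar_eq_image bar m k hbar (by omega : k ≤ w₂.length)]
    have hset : {s | Reach bar m k w₂ s} = {s | Reach bar m k w₁ s} := by
      ext s
      exact ⟨fun hr => reach_transfer bar m k hbar hm hk h₂ h₁ h.symm hr,
             fun hr => reach_transfer bar m k hbar hm hk h₁ h₂ h hr⟩
    rw [hset]


end Hairpin
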